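/- In the setting of the extension lemma: for χ ∈ Ĝ, a function f ∈ C(H,A) lies in the isotypic component A'(χ) of α' if and only if f = χ_H ⊗ f(0) with f(0) ∈ A(χ_N), where χ_H(h) := χ(0,h) and χ_N(n) := χ(n,0); hence A'(χ) = χ_H ⊗ A(χ_N), the fixed point algebra of (A', G, α') is 1 ⊗ A^N ≅ A^N, and if (A, N, α) is free then (A', G, α') is free. -/

import Mathlib

/-- Lemma `lem:cocycle`, second part: for the twisted action
`(α'_{(n,h)} f)(h') = α_{n+ω(h',h)}(f(h'+h))` of `G = N ×_ω H` on `C(H,A)` and a character `χ`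
of `G`, a continuous `f : H → A` lies in the isotypic component `A'(χ)` iff `f = χ_H ⊗ f(0)`
with `f(0) ∈ A(χ_N)`; the fixed point algebra is `1 ⊗ A^N ≅ A^N`; and if `(A, N, α)` is free
then so is `(A', G, α')` (freeness witnessed by unitals/nonvanishing of isotypic components). -/
theorem stmt15 {A : Type*} [NormedRing A] [StarRing A] [CStarRing A] [CompleteSpace A]
    [NormedAlgebra ℂ A] [StarModule ℂ A]
    {N : Type*} [AddCommGroup N] [TopologicalSpace N] [IsTopologicalAddGroup N] [CompactSpace N]
    {H : Type*} [AddCommGroup H] [TopologicalSpace H] [IsTopologicalAddGroup H] [CompactSpace H]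
    (ω : H × H → N) (hωcont : Continuous ω)
    (hωsymm : ∀ h₁ h₂ : H, ω (h₁, h₂) = ω (h₂, h₁))
    (hωnorm : ∀ h : H, ω (0, h) = 0 ∧ ω (h, 0) = 0)
    (hωcoc : ∀ h₁ h₂ h₃ : H,
      ω (h₁, h₂) + ω (h₁ + h₂, h₃) = ω (h₂, h₃) + ω (h₁, h₂ + h₃))
    (α : N → (A ≃⋆ₐ[ℂ] A))
    (hα0 : ∀ a : A, α 0 a = a)
    (hαadd : ∀ (m n : N) (a : A), α (m + n) a = α m (α n a))
    (hαcont : ∀ a : A, Continuous fun n => α n a)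
    -- a character `χ` of the central extension `G = N ×_ω H`
    (χ : N × H → ℂ) (hχcont : Continuous χ) (hχnorm : ∀ p, ‖χ p‖ = 1)
    (hχmul : ∀ p q : N × H,
      χ (p.1 + q.1 + ω (p.2, q.2), p.2 + q.2) = χ p * χ q) :
    -- (1) `A'(χ) = χ_H ⊗ A(χ_N)`
    (∀ f : H → A, Continuous f →
      ((∀ (n : N) (h h' : H), α (n + ω (h', h)) (f (h' + h)) = χ (n, h) • f h') ↔
        ((∀ h : H, f h = χ (0, h) • f 0) ∧ (∀ n : N, α n (f 0) = χ (n, 0) • f 0)))) ∧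
    -- (2) the fixed point algebra is `1 ⊗ A^N ≅ A^N`
    (∀ f : H → A, Continuous f →
      ((∀ (n : N) (h h' : H), α (n + ω (h', h)) (f (h' + h)) = f h') ↔
        ((∀ h : H, f h = f 0) ∧ (∀ n : N, α n (f 0) = f 0)))) ∧
    -- (3) freeness passes from `(A, N, α)` to `(A', G, α')`
    ((∀ ρ : N → ℂ, Continuous ρ → (∀ m, ‖ρ m‖ = 1) →
        (∀ m n : N, ρ (m + n) = ρ m * ρ n) →
        ∃ a : A, a ≠ 0 ∧ ∀ m : N, α m a = ρ m • a) →
      ∃ f : H → A, Continuous f ∧ f ≠ 0 ∧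
        ∀ (n : N) (h h' : H), α (n + ω (h', h)) (f (h' + h)) = χ (n, h) • f h') := by

  have hω00 : ω 0 = (0 : N) := (hωnorm 0).1
  have hχ00 : χ 0 = 1 := by
    have h := hχmul (0, 0) (0, 0)
    rw [show ω ((0:H),(0:H)) = 0 from hω00, add_zero, add_zero, add_zero] at h
    have hne : χ 0 ≠ 0 := by
      intro h0
      have := hχnorm 0
      rw [h0] at this; simp at this
    have h' : χ 0 * 1 = χ 0 * χ 0 := by rw [mul_one]; exact h
    exact (mul_left_cancel₀ hne h').symm
  -- key character identity
  have key : ∀ (n : N) (h h' : H),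
      χ (0, h' + h) * χ (n + ω (h', h), 0) = χ (n, h) * χ (0, h') := by
    intro n h h'
    have h1 := hχmul (n + ω (h', h), 0) (0, h' + h)
    have h2 := hχmul (n, h) (0, h')
    simp only [(hωnorm (h' + h)).1, add_zero, zero_add] at h1
    simp only [add_zero, zero_add] at h2
    rw [hωsymm h h', add_comm h h'] at h2
    rw [mul_comm, ← h1, h2]
  have hsmul : ∀ (m : N) (c : ℂ) (a : A), α m (c • a) = c • α m a := by
    intro m c a; exact map_smul (α m) c a
  refine ⟨?_, ?_, ?_⟩
  · intro f hf
    constructor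
    · intro heq
      constructor
      · intro h
        have := heq 0 h 0
        simpa [(hωnorm h).1, hα0] using this
      · intro n
        have := heq n 0 0
        rw [show ((0:H)+(0:H)) = 0 from add_zero 0] at this
        rw [show ω ((0:H),(0:H)) = 0 from hω00, add_zero] at this
        exact this
    · rintro ⟨h1, h2⟩ n h h'
      rw [h1 (h' + h), hsmul, h2, smul_smul, key, h1 h', smul_smul]
  · intro f hf
    constructor
    · intro heq
      constructor
      · intro h
        have := heq 0 h 0
        simpa [(hωnorm h).1, hα0] using this
      · intro n
        have := heq n 0 0
        rw [show ((0:H)+(0:H)) = 0 from add_zero 0] at this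
        rw [show ω ((0:H),(0:H)) = 0 from hω00, add_zero] at this
        exact this
    · rintro ⟨h1, h2⟩ n h h'
      rw [h1 (h' + h), h2, h1 h']
  · intro hfree
    obtain ⟨a, ha, haeq⟩ := hfree (fun n => χ (n, 0))
      (hχcont.comp (by continuity))
      (fun m => hχnorm (m, 0))
      (fun m n => by
        have := hχmul (m, 0) (n, 0)
        rw [show ω ((0:H),(0:H)) = 0 from hω00, add_zero, add_zero] at this
        exact this)
    refine ⟨fun h => χ (0, h) • a, ?_, ?_, ?_⟩
    · exact (hχcont.comp (by continuity)).smul continuous_const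
    · intro hf
      apply ha
      have := congrFun hf 0
      simpa [Prod.mk_zero_zero, hχ00] using this
    · intro n h h'
      rw [hsmul, haeq, smul_smul, key, smul_smul]
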